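/- Let K = Σ_n (n − 1/2)² :ψ_{−n}ψ*_n: be the fermionic cut-and-join operator. For integers k, m and a rational number γ with 2mγ ∈ ℤ, conjugation gives q^{γK} V^{(k)}_m q^{−γK} = V^{(k − 2mγ)}_m. -/

import Mathlib

open scoped Classical

/-- A partition: a weakly decreasing, finitely supported sequence of naturals. -/
def Ptn : Type := {f : ℕ → ℕ // Antitone f ∧ (Function.support f).Finite}

/-- The weight |μ| of a partition. -/
noncomputable def wtP (μ : Ptn) : ℕ := ∑ᶠ i, μ.1 i

/-- The second Casimir κ(μ) = Σ μ_i (μ_i - 2i + 1) (0-indexed form). -/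
noncomputable def kappaZ (f : ℕ → ℕ) : ℤ :=
  ∑ᶠ i : ℕ, (f i : ℤ) * ((f i : ℤ) - 2 * (i : ℤ) - 1)

/-- The charge-0 sector of the fermionic Fock space: the free module on partitions. -/
abbrev Fock (R : Type) [Semiring R] := Ptn →₀ R

/-- The set of occupied fermion (ψ) indices of the state |μ⟩ : D(μ) = {i − μ_{i+1} : i ∈ ℕ}. -/
def Dset (μ : Ptn) : Set ℤ := Set.range fun i : ℕ => (i : ℤ) - (μ.1 i : ℤ)

/-- The fermionic sign produced by ψ_a ψ*_b acting on the Maya diagram of l. -/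
noncomputable def moveCoeff (l : Ptn) (a b : ℤ) : ℤ :=
  (-1) ^ (Nat.card {d : ℤ | d ∈ Dset l ∧ d < -b} + Nat.card {d : ℤ | d ∈ Dset l \ {-b} ∧ d < a})

/-- The operator ψ_a ψ*_b on the charge-0 Fock space: it removes the particle at
index −b and creates one at index a, with the appropriate fermionic sign. -/
noncomputable def psiPsiStar (R : Type) [Field R] (a b : ℤ) : Fock R →ₗ[R] Fock R :=
  Finsupp.lift (Fock R) R Ptn fun l =>
    if h : (-b) ∈ Dset l ∧ a ∉ Dset l \ {-b} ∧ ∃ m : Ptn, Dset m = insert a (Dset l \ {-b})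
    then (moveCoeff l a b : R) • Finsupp.single h.2.2.choose (1 : R)
    else 0

/-- The normally ordered product :ψ_a ψ*_b: = ψ_a ψ*_b − ⟨0|ψ_a ψ*_b|0⟩. -/
noncomputable def nord (R : Type) [Field R] (a b : ℤ) : Fock R →ₗ[R] Fock R :=
  psiPsiStar R a b - (if a + b = 0 ∧ b ≤ 0 then (1 : R) else 0) • LinearMap.id

/-- The U(1) current mode J_m = Σ_n :ψ_{m−n} ψ*_n:. -/
noncomputable def Jop (R : Type) [Field R] (m : ℤ) : Fock R →ₗ[R] Fock R :=
  Finsupp.lift (Fock R) R Ptn fun l => ∑ᶠ n : ℤ, nord R (m - n) n (Finsupp.single l 1)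

/-- The quantum-torus generator V^{(k)}_m = q^{−k(m+1)/2} Σ_n q^{kn} :ψ_{m−n}ψ*_n:
− (q^{k/2}/(1−q^k)) δ_{m,0}, with V^{(0)}_m = J_m; here v = q^{1/2}. -/
noncomputable def Vop (R : Type) [Field R] (v : R) (k m : ℤ) : Fock R →ₗ[R] Fock R :=
  if k = 0 then Jop R m else
  Finsupp.lift (Fock R) R Ptn fun l =>
    v ^ (-(k * (m + 1))) • (∑ᶠ n : ℤ, v ^ (2 * k * n) • nord R (m - n) n (Finsupp.single l 1))
      - (v ^ k / (1 - v ^ (2 * k))) • (if m = 0 then Finsupp.single l 1 else 0)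

/-- q^{γK} = exp(γ K log q) : the cut-and-join operator K = Σ_n (n−1/2)² :ψ_{−n}ψ*_n:
acts diagonally with eigenvalues κ(λ), so q^{γK}|λ⟩ = exp(2lγκ(λ))|λ⟩ where q = e^{2l}. -/
noncomputable def qgK (l : ℂ) (γ : ℚ) : Fock ℂ →ₗ[ℂ] Fock ℂ :=
  Finsupp.lift (Fock ℂ) ℂ Ptn fun lam =>
    Complex.exp (2 * l * (γ : ℂ) * (kappaZ lam.1 : ℂ)) • Finsupp.single lam (1 : ℂ)

namespace QKaux

noncomputable def dseq (μ : Ptn) (i : ℕ) : ℤ := (i : ℤ) - (μ.1 i : ℤ)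

lemma dseq_strictMono (μ : Ptn) : StrictMono (dseq μ) := by
  intro i j hij
  have h1 : (μ.1 j : ℤ) ≤ (μ.1 i : ℤ) := by exact_mod_cast μ.2.1 (le_of_lt hij)
  have h2 : (i : ℤ) < (j : ℤ) := by exact_mod_cast hij
  simp only [dseq]; omega

lemma Dset_eq_range (μ : Ptn) : Dset μ = Set.range (dseq μ) := rfl

lemma exists_bound (μ : Ptn) : ∃ N : ℕ, ∀ i, N ≤ i → μ.1 i = 0 := by
  obtain ⟨N, hN⟩ := μ.2.2.bddAbove
  refine ⟨N + 1, fun i hi => ?_⟩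
  by_contra h
  have := hN (a := i) (by simpa [Function.mem_support] using h)
  omega

lemma dseq_eq_self {μ : Ptn} {N : ℕ} (hN : ∀ i, N ≤ i → μ.1 i = 0) {i : ℕ} (hi : N ≤ i) :
    dseq μ i = (i : ℤ) := by simp [dseq, hN i hi]

lemma mem_Dset_iff {μ : Ptn} {z : ℤ} : z ∈ Dset μ ↔ ∃ i : ℕ, dseq μ i = z := Iff.rfl

lemma mem_Dset_of_ge {μ : Ptn} {N : ℕ} (hN : ∀ i, N ≤ i → μ.1 i = 0) {z : ℤ}
    (hz : (N : ℤ) ≤ z) : z ∈ Dset μ := by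
  rw [mem_Dset_iff]
  refine ⟨z.toNat, ?_⟩
  have h0 : (0 : ℤ) ≤ z := le_trans (by positivity) hz
  have h2 : N ≤ z.toNat := by omega
  simp only [dseq, hN _ h2]
  omega

lemma lower_of_mem_Dset {μ : Ptn} {z : ℤ} (hz : z ∈ Dset μ) : -(μ.1 0 : ℤ) ≤ z := by
  rw [mem_Dset_iff] at hz
  obtain ⟨i, hi⟩ := hz
  have h1 : (μ.1 i : ℤ) ≤ (μ.1 0 : ℤ) := by exact_mod_cast μ.2.1 (Nat.zero_le i)
  have h2 : (0:ℤ) ≤ (i:ℤ) := by positivity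
  simp only [dseq] at hi
  omega

lemma strictMono_range_eq {f g : ℕ → ℤ} (hf : StrictMono f) (hg : StrictMono g)
    (h : Set.range f = Set.range g) : f = g := by
  have key : ∀ n, f n = g n := by
    intro n
    induction n using Nat.strong_induction_on with
    | _ n ih =>
      obtain ⟨m, hm⟩ : g n ∈ Set.range f := by rw [h]; exact Set.mem_range_self n
      obtain ⟨m', hm'⟩ : f n ∈ Set.range g := by rw [← h]; exact Set.mem_range_self n
      have h1 : n ≤ m := by
        by_contra hlt
        push_neg at hlt
        have he := ih m hlt
        have : g m = g n := by rw [← he, hm]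
        have := hg.injective this
        omega
      have h2 : n ≤ m' := by
        by_contra hlt
        push_neg at hlt
        have he := ih m' hlt
        have : f m' = f n := by rw [he, hm']
        have := hf.injective this
        omega
      have h3 := hf.monotone h1
      have h4 := hg.monotone h2
      omega
  funext n; exact key n

lemma Dset_injective : Function.Injective Dset := by
  intro μ ν h
  have h2 : dseq μ = dseq ν :=
    strictMono_range_eq (dseq_strictMono μ) (dseq_strictMono ν) h
  apply Subtype.ext
  funext i
  have h3 := congrFun h2 i
  simp only [dseq] at h3
  omega

lemma kappaZ_eq (μ : Ptn) :
    kappaZ μ.1 = ∑ᶠ i : ℕ, ((dseq μ i) ^ 2 + dseq μ i - (i : ℤ) ^ 2 - (i : ℤ)) := by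
  unfold kappaZ
  apply finsum_congr
  intro i
  simp only [dseq]; ring

lemma mem_image_iff {μ : Ptn} {N : ℕ} (hN : ∀ i, N ≤ i → μ.1 i = 0) {d : ℤ} :
    d ∈ (Finset.range N).image (dseq μ) ↔ d ∈ Dset μ ∧ d < (N : ℤ) := by
  constructor
  · intro hd
    rw [Finset.mem_image] at hd
    obtain ⟨i, hi, rfl⟩ := hd
    rw [Finset.mem_range] at hi
    refine ⟨⟨i, rfl⟩, ?_⟩
    calc dseq μ i < dseq μ N := dseq_strictMono μ hi
    _ = (N : ℤ) := dseq_eq_self hN le_rfl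
  · rintro ⟨hd, hlt⟩
    rw [mem_Dset_iff] at hd
    obtain ⟨i, rfl⟩ := hd
    rw [Finset.mem_image]
    refine ⟨i, ?_, rfl⟩
    rw [Finset.mem_range]
    by_contra hge
    push_neg at hge
    rw [dseq_eq_self hN hge] at hlt
    omega

lemma kappa_move {lam ν : Ptn} {a b : ℤ} (hb : (-b) ∈ Dset lam) (ha : a ∉ Dset lam \ {-b})
    (hD : Dset ν = insert a (Dset lam \ {-b})) :
    kappaZ ν.1 = kappaZ lam.1 + (a ^ 2 + a) - (b ^ 2 - b) := by
  obtain ⟨N1, hN1⟩ := exists_bound lam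
  obtain ⟨N2, hN2⟩ := exists_bound ν
  set N : ℕ := max (max N1 N2) (max (a + 1).toNat ((-b) + 1).toNat) with hNdef
  have hNl : ∀ i, N ≤ i → lam.1 i = 0 := fun i hi => hN1 i (by omega)
  have hNν : ∀ i, N ≤ i → ν.1 i = 0 := fun i hi => hN2 i (by omega)
  have haN : a < (N : ℤ) := by
    have h1 : (a + 1).toNat ≤ N := by omega
    have h2 : a + 1 ≤ ((a + 1).toNat : ℤ) := Int.self_le_toNat _
    have h3 : (((a+1).toNat : ℕ) : ℤ) ≤ (N : ℤ) := by exact_mod_cast h1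
    omega
  have hbN : (-b) < (N : ℤ) := by
    have h1 : ((-b) + 1).toNat ≤ N := by omega
    have h2 : (-b) + 1 ≤ (((-b) + 1).toNat : ℤ) := Int.self_le_toNat _
    have h3 : ((((-b)+1).toNat : ℕ) : ℤ) ≤ (N : ℤ) := by exact_mod_cast h1
    omega
  have hsupp : ∀ (μ : Ptn), (∀ i, N ≤ i → μ.1 i = 0) →
      (∑ᶠ i : ℕ, ((dseq μ i) ^ 2 + dseq μ i - (i : ℤ) ^ 2 - (i : ℤ)))
        = ∑ i ∈ Finset.range N, ((dseq μ i) ^ 2 + dseq μ i - (i : ℤ) ^ 2 - (i : ℤ)) := by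
    intro μ hμ
    apply finsum_eq_sum_of_support_subset
    intro i hi
    simp only [Function.mem_support] at hi
    rw [Finset.coe_range, Set.mem_Iio]
    by_contra hge
    push_neg at hge
    exact hi (by rw [dseq_eq_self hμ hge]; ring)
  have himg : ∀ (μ : Ptn),
      (∑ i ∈ Finset.range N, ((dseq μ i) ^ 2 + dseq μ i))
        = ∑ d ∈ (Finset.range N).image (dseq μ), (d ^ 2 + d) := by
    intro μ
    rw [Finset.sum_image (fun i _ j _ h => (dseq_strictMono μ).injective h)]
  have hFset : (Finset.range N).image (dseq ν)
      = insert a (((Finset.range N).image (dseq lam)).erase (-b)) := by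
    ext d
    rw [mem_image_iff hNν, Finset.mem_insert, Finset.mem_erase, mem_image_iff hNl, hD]
    simp only [Set.mem_insert_iff, Set.mem_diff, Set.mem_singleton_iff]
    constructor
    · rintro ⟨(rfl | ⟨hdl, hdb⟩), hlt⟩
      · exact Or.inl rfl
      · exact Or.inr ⟨hdb, hdl, hlt⟩
    · rintro (rfl | ⟨hdb, hdl, hlt⟩)
      · exact ⟨Or.inl rfl, haN⟩
      · exact ⟨Or.inr ⟨hdl, hdb⟩, hlt⟩
  have hbmem : (-b) ∈ (Finset.range N).image (dseq lam) := (mem_image_iff hNl).2 ⟨hb, hbN⟩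
  have hamem : a ∉ ((Finset.range N).image (dseq lam)).erase (-b) := by
    intro hmem
    rw [Finset.mem_erase, mem_image_iff hNl] at hmem
    exact ha ⟨hmem.2.1, hmem.1⟩
  have e1 : ∀ μ : Ptn, (∑ i ∈ Finset.range N, ((dseq μ i) ^ 2 + dseq μ i - (i : ℤ) ^ 2 - (i : ℤ)))
      = (∑ i ∈ Finset.range N, ((dseq μ i) ^ 2 + dseq μ i))
        - ∑ i ∈ Finset.range N, ((i : ℤ) ^ 2 + (i : ℤ)) := by
    intro μ
    rw [← Finset.sum_sub_distrib]
    exact Finset.sum_congr rfl (fun i _ => by ring)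
  rw [kappaZ_eq, kappaZ_eq, hsupp ν hNν, hsupp lam hNl, e1, e1, himg ν, himg lam, hFset,
      Finset.sum_insert hamem, ← Finset.add_sum_erase _ _ hbmem]
  ring



lemma lift_single {R : Type} [Semiring R] {M : Type} [AddCommMonoid M] [Module R M]
    (f : Ptn → M) (x : Ptn) :
    (Finsupp.lift M R Ptn f) (Finsupp.single x (1 : R)) = f x := by
  rw [Finsupp.lift_apply, Finsupp.sum_single_index (by simp)]
  simp

lemma psiPsiStar_single_of_cond {R : Type} [Field R] {a b : ℤ} {lam μ : Ptn}
    (h : (-b) ∈ Dset lam ∧ a ∉ Dset lam \ {-b} ∧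
      ∃ m : Ptn, Dset m = insert a (Dset lam \ {-b}))
    (hμ : Dset μ = insert a (Dset lam \ {-b})) :
    psiPsiStar R a b (Finsupp.single lam 1)
      = (moveCoeff lam a b : R) • Finsupp.single μ (1 : R) := by
  unfold psiPsiStar
  rw [lift_single, dif_pos h]
  congr 2
  exact Dset_injective (h.2.2.choose_spec.trans hμ.symm)

lemma psiPsiStar_single_of_not {R : Type} [Field R] {a b : ℤ} {lam : Ptn}
    (h : ¬((-b) ∈ Dset lam ∧ a ∉ Dset lam \ {-b} ∧
      ∃ m : Ptn, Dset m = insert a (Dset lam \ {-b}))) :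
    psiPsiStar R a b (Finsupp.single lam 1) = 0 := by
  unfold psiPsiStar
  rw [lift_single, dif_neg h]

lemma moveCoeff_diag (lam : Ptn) (b : ℤ) : moveCoeff lam (-b) b = 1 := by
  unfold moveCoeff
  have hset : {d : ℤ | d ∈ Dset lam \ {-b} ∧ d < -b} = {d : ℤ | d ∈ Dset lam ∧ d < -b} := by
    ext d
    simp only [Set.mem_setOf_eq, Set.mem_diff, Set.mem_singleton_iff]
    constructor
    · rintro ⟨⟨h1, _⟩, h2⟩; exact ⟨h1, h2⟩
    · rintro ⟨h1, h2⟩; exact ⟨⟨h1, by omega⟩, h2⟩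
  rw [hset, ← two_mul, pow_mul]
  norm_num

lemma psiPsiStar_diag {R : Type} [Field R] {lam : Ptn} {n : ℤ} (hn : (-n) ∈ Dset lam) :
    psiPsiStar R (-n) n (Finsupp.single lam 1) = Finsupp.single lam 1 := by
  have hins : insert (-n) (Dset lam \ {-n}) = Dset lam := by
    rw [Set.insert_diff_singleton]
    exact Set.insert_eq_self.2 hn
  have hnot : (-n) ∉ Dset lam \ {-n} := fun h => h.2 rfl
  rw [psiPsiStar_single_of_cond ⟨hn, hnot, ⟨lam, hins.symm⟩⟩ hins.symm, moveCoeff_diag]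
  simp

lemma nord_single {R : Type} [Field R] (a b : ℤ) (lam : Ptn) :
    nord R a b (Finsupp.single lam 1)
      = psiPsiStar R a b (Finsupp.single lam 1)
        - (if a + b = 0 ∧ b ≤ 0 then (1 : R) else 0) • Finsupp.single lam 1 := by
  simp only [nord, LinearMap.sub_apply, LinearMap.smul_apply, LinearMap.id_apply]

lemma qgK_single (l : ℂ) (γ : ℚ) (lam : Ptn) :
    qgK l γ (Finsupp.single lam 1)
      = Complex.exp (2 * l * (γ : ℂ) * (kappaZ lam.1 : ℂ)) • Finsupp.single lam 1 := by
  unfold qgK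
  rw [lift_single]

lemma qgK_nord (l : ℂ) (γ : ℚ) (a b : ℤ) (lam : Ptn) :
    qgK l γ (nord ℂ a b (Finsupp.single lam 1))
      = Complex.exp (2 * l * (γ : ℂ) *
          ((kappaZ lam.1 + (a ^ 2 + a) - (b ^ 2 - b) : ℤ) : ℂ)) •
        nord ℂ a b (Finsupp.single lam 1) := by
  by_cases hcond : (-b) ∈ Dset lam ∧ a ∉ Dset lam \ {-b} ∧
      ∃ m : Ptn, Dset m = insert a (Dset lam \ {-b})
  · by_cases hδ : a + b = 0 ∧ b ≤ 0
    · have hab : a = -b := by omega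
      subst hab
      rw [nord_single, psiPsiStar_diag hcond.1, if_pos hδ, one_smul, sub_self, map_zero,
        smul_zero]
    · have hμ := hcond.2.2.choose_spec
      have hk : kappaZ hcond.2.2.choose.1 = kappaZ lam.1 + (a ^ 2 + a) - (b ^ 2 - b) :=
        kappa_move hcond.1 hcond.2.1 hμ
      rw [nord_single, if_neg hδ, zero_smul, sub_zero,
        psiPsiStar_single_of_cond hcond hμ, map_smul, qgK_single]
      have hc2 : (kappaZ hcond.2.2.choose.1 : ℂ)
          = ((kappaZ lam.1 + (a ^ 2 + a) - (b ^ 2 - b) : ℤ) : ℂ) := by exact_mod_cast hk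
      rw [hc2, smul_comm]
  · rw [nord_single, psiPsiStar_single_of_not hcond, zero_sub, map_neg, map_smul, qgK_single]
    by_cases hδ : a + b = 0 ∧ b ≤ 0
    · rw [if_pos hδ]
      have hab : a = -b := by omega
      have hz : (kappaZ lam.1 + (a ^ 2 + a) - (b ^ 2 - b) : ℤ) = kappaZ lam.1 := by
        subst hab; ring
      rw [hz, one_smul, smul_neg]
      simp
    · rw [if_neg hδ]
      simp

lemma nord_support (m : ℤ) (lam : Ptn) {N : ℕ} (hN : ∀ i, N ≤ i → lam.1 i = 0) (n : ℤ)
    (hn : n < min (-(N : ℤ)) (m - (N : ℤ)) ∨ (lam.1 0 : ℤ) < n) :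
    nord ℂ (m - n) n (Finsupp.single lam 1) = 0 := by
  rcases hn with hlo | hhi
  · have h1 : (-n) ∈ Dset lam := mem_Dset_of_ge hN (by omega)
    by_cases hm : m = 0
    · subst hm
      have ha : (0 : ℤ) - n = -n := by ring
      rw [nord_single, ha, psiPsiStar_diag h1, if_pos ⟨by ring, by omega⟩, one_smul, sub_self]
    · have h2 : (m - n) ∈ Dset lam := mem_Dset_of_ge hN (by omega)
      have hcond : ¬((-n) ∈ Dset lam ∧ (m - n) ∉ Dset lam \ {-n} ∧
          ∃ μ : Ptn, Dset μ = insert (m - n) (Dset lam \ {-n})) := by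
        rintro ⟨_, hnot, _⟩
        exact hnot ⟨h2, by simp only [Set.mem_singleton_iff]; omega⟩
      rw [nord_single, psiPsiStar_single_of_not hcond, if_neg (by rintro ⟨h, _⟩; omega)]
      simp
  · have h1 : (-n) ∉ Dset lam := fun h => by have := lower_of_mem_Dset h; omega
    have hcond : ¬((-n) ∈ Dset lam ∧ (m - n) ∉ Dset lam \ {-n} ∧
        ∃ μ : Ptn, Dset μ = insert (m - n) (Dset lam \ {-n})) := fun h => h1 h.1
    have h0 : (0 : ℤ) ≤ (lam.1 0 : ℤ) := by positivity
    rw [nord_single, psiPsiStar_single_of_not hcond, if_neg (by rintro ⟨_, h⟩; omega)]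
    simp

lemma Vop_single (v : ℂ) (k m : ℤ) (lam : Ptn) :
    Vop ℂ v k m (Finsupp.single lam 1)
      = v ^ (-(k * (m + 1))) •
          (∑ᶠ n : ℤ, v ^ (2 * k * n) • nord ℂ (m - n) n (Finsupp.single lam 1))
        - (v ^ k / (1 - v ^ (2 * k))) • (if m = 0 then Finsupp.single lam 1 else 0) := by
  unfold Vop
  by_cases hk : k = 0
  · subst hk
    rw [if_pos rfl]
    unfold Jop
    rw [lift_single]
    simp [zpow_zero, mul_zero, zero_mul]
  · rw [if_neg hk, lift_single]

end QKaux

/-- q^{γK} V^{(k)}_m q^{−γK} = V^{(k−2mγ)}_m for rational γ with 2mγ = c ∈ ℤ. -/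
theorem qK_conjugation (l v q : ℂ) (hvl : v = Complex.exp l) (hq : q = v ^ 2)
    (h1 : ‖q‖ < 1) (k m : ℤ) (γ : ℚ) (c : ℤ) (hc : (c : ℚ) = 2 * (m : ℚ) * γ) :
    (qgK l γ) ∘ₗ (Vop ℂ v k m) ∘ₗ (qgK l (-γ)) = Vop ℂ v (k - c) m := by
  have hcC : (c : ℂ) = 2 * (m : ℂ) * (γ : ℂ) := by exact_mod_cast hc
  apply Finsupp.lhom_ext
  intro lam r
  have hr : (Finsupp.single lam r : Fock ℂ) = r • Finsupp.single lam 1 := by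
    rw [Finsupp.smul_single, smul_eq_mul, mul_one]
  rw [hr, map_smul, map_smul]
  congr 1
  obtain ⟨N, hN⟩ := QKaux.exists_bound lam
  set s : Finset ℤ := Finset.Icc (min (-(N : ℤ)) (m - (N : ℤ))) ((lam.1 0 : ℤ)) with hs
  have hTs : ∀ n : ℤ, n ∉ s → nord ℂ (m - n) n (Finsupp.single lam 1) = 0 := by
    intro n hns
    apply QKaux.nord_support m lam hN
    rw [hs, Finset.mem_Icc] at hns
    omega
  have hred : ∀ α : ℤ → ℂ, (∑ᶠ n : ℤ, α n • nord ℂ (m - n) n (Finsupp.single lam 1))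
      = ∑ n ∈ s, α n • nord ℂ (m - n) n (Finsupp.single lam 1) := by
    intro α
    apply finsum_eq_sum_of_support_subset
    intro n hn
    simp only [Function.mem_support] at hn
    by_contra hns
    exact hn (by rw [hTs n hns, smul_zero])
  have hred1 : (∑ᶠ n : ℤ, v ^ (2 * k * n) • nord ℂ (m - n) n (Finsupp.single lam 1))
      = ∑ n ∈ s, v ^ (2 * k * n) • nord ℂ (m - n) n (Finsupp.single lam 1) := hred _
  have hred2 : (∑ᶠ n : ℤ, v ^ (2 * (k - c) * n) • nord ℂ (m - n) n (Finsupp.single lam 1))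
      = ∑ n ∈ s, v ^ (2 * (k - c) * n) • nord ℂ (m - n) n (Finsupp.single lam 1) := hred _
  rw [LinearMap.comp_apply, LinearMap.comp_apply, QKaux.qgK_single, map_smul, map_smul,
    QKaux.Vop_single, QKaux.Vop_single, hred1, hred2, map_sub, map_smul, map_smul, map_sum,
    smul_sub]
  congr 1
  · simp only [map_smul, QKaux.qgK_nord, Finset.smul_sum, smul_smul]
    apply Finset.sum_congr rfl
    intro n _
    congr 1
    rw [hvl]
    simp only [← Complex.exp_int_mul, ← Complex.exp_add]
    congr 1
    push_cast
    linear_combination ((2 * (n : ℂ) - (m : ℂ) - 1) * l) * hcC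
  · by_cases hm : m = 0
    · have hc0 : c = 0 := by
        have h2 : (c : ℚ) = 0 := by rw [hc, hm]; push_cast; ring
        exact_mod_cast h2
      subst hc0
      rw [if_pos hm, QKaux.qgK_single, sub_zero, smul_smul, smul_smul]
      congr 1
      have hE : Complex.exp (2 * l * ((-γ : ℚ) : ℂ) * (kappaZ lam.1 : ℂ))
          * Complex.exp (2 * l * (γ : ℂ) * (kappaZ lam.1 : ℂ)) = 1 := by
        rw [← Complex.exp_add]
        have h3 : 2 * l * ((-γ : ℚ) : ℂ) * (kappaZ lam.1 : ℂ)
            + 2 * l * (γ : ℂ) * (kappaZ lam.1 : ℂ) = 0 := by push_cast; ring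
        rw [h3, Complex.exp_zero]
      linear_combination (v ^ k / (1 - v ^ (2 * k))) * hE
    · rw [if_neg hm]
      simp
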